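/- (Generalized Jacobi identity, first form) Let L be a Lie algebra, let X_1,...,X_m ∈ L, let v be a word of length p ≥ 1 and w a word of length q ≥ 1 in {1,...,m}. Denote by X_u the left-nested bracket [X_{u_1},[X_{u_2},...,[X_{u_{k-1}},X_{u_k}]]...] for a word u, and by X_{[v]w} the bracket [X_v, X_w]. Then X_{[v]w} = Σ_{σ ∈ S_p} π_p(σ) X_{σ_1(v)⋯σ_p(v)w}, where σ(v) is the word v rearranged by σ and the right-hand side terms are left-nested brackets of the concatenated word σ(v)w. -/

import Mathlib

/-- The coefficient `π_ℓ` evaluated on the word `σ(1)σ(2)⋯σ(ℓ)` (letters `0,…,ℓ-1`),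
defined inductively: value `1` on a single letter; if the word starts with the
smallest letter `0`, recurse on the remaining (shifted) word; if it ends with `0`,
recurse with a sign change; otherwise the value is `0`. -/
def piW : List ℕ → ℤ
  | [] => 0
  | [_] => 1
  | a :: b :: l =>
    if a = 0 then piW ((b :: l).map (· - 1))
    else if (a :: b :: l).getLast? = some 0 then
      - piW ((a :: b :: l).dropLast.map (· - 1))
    else 0
termination_by w => w.length
decreasing_by all_goals (simp; try omega)

/-- `π_ℓ(σ)` for a permutation `σ` of `ℓ` letters. -/
def piPerm {ℓ : ℕ} (σ : Equiv.Perm (Fin ℓ)) : ℤ :=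
  piW ((List.finRange ℓ).map (fun j => (σ j : ℕ)))

/-- Left-nested Lie bracket of a list: `[x₁,[x₂,…,[x_{k-1},x_k]…]]`. -/
def nestedBracket {L : Type*} [LieRing L] : List L → L
  | [] => 0
  | [x] => x
  | x :: y :: l => ⁅x, nestedBracket (y :: l)⁆

/-! ### Auxiliary definitions and lemmas -/

/-- Iterated adjoint action: `⁅x₁, ⁅x₂, …, ⁅x_k, y⁆…⁆⁆`. -/
def foldBr {L : Type*} [LieRing L] (xs : List L) (y : L) : L :=
  xs.foldr (fun a b => ⁅a, b⁆) y

@[simp] lemma foldBr_nil {L : Type*} [LieRing L] (y : L) : foldBr [] y = y := rfl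

@[simp] lemma foldBr_cons {L : Type*} [LieRing L] (x : L) (l : List L) (y : L) :
    foldBr (x :: l) y = ⁅x, foldBr l y⁆ := rfl

lemma foldBr_concat {L : Type*} [LieRing L] (l : List L) (x y : L) :
    foldBr (l ++ [x]) y = foldBr l ⁅x, y⁆ := by
  simp [foldBr, List.foldr_append]

lemma nestedBracket_cons {L : Type*} [LieRing L] (x : L) (l : List L) (h : l ≠ []) :
    nestedBracket (x :: l) = ⁅x, nestedBracket l⁆ := by
  cases l with
  | nil => exact absurd rfl h
  | cons a l => rfl

lemma nestedBracket_append {L : Type*} [LieRing L] (xs ys : List L) (h : ys ≠ []) :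
    nestedBracket (xs ++ ys) = foldBr xs (nestedBracket ys) := by
  induction xs with
  | nil => simp
  | cons x xs ih =>
    rw [List.cons_append, nestedBracket_cons x _ (fun hc => h (List.append_eq_nil_iff.mp hc).2),
      ih, foldBr_cons]

lemma lie_finset_sum {L : Type*} [LieRing L] {ι : Type*} (x : L) (s : Finset ι) (f : ι → L) :
    ⁅x, ∑ i ∈ s, f i⁆ = ∑ i ∈ s, ⁅x, f i⁆ :=
  map_sum (AddMonoidHom.mk' (fun m => ⁅x, m⁆) (lie_add x)) f s

/-! ### `piW` computation lemmas -/

lemma piW_zero_cons (b : ℕ) (l : List ℕ) :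
    piW (0 :: b :: l) = piW ((b :: l).map (· - 1)) := by
  simp [piW]

lemma piW_of_ne (a b : ℕ) (l : List ℕ) (ha : a ≠ 0) (hl : (a :: b :: l).getLast? ≠ some 0) :
    piW (a :: b :: l) = 0 := by
  rw [piW, if_neg ha, if_neg hl]

lemma piW_concat_zero (a : ℕ) (l : List ℕ) (ha : a ≠ 0) :
    piW ((a :: l) ++ [0]) = - piW ((a :: l).map (· - 1)) := by
  cases hl : l ++ [0] with
  | nil => simp at hl
  | cons b l' =>
    have heq : (a :: l) ++ [0] = a :: b :: l' := by rw [List.cons_append, hl]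
    have hlast : (a :: b :: l').getLast? = some 0 := by
      rw [← heq]; exact List.getLast?_concat
    have hdrop : (a :: b :: l').dropLast = a :: l := by
      rw [← heq]; exact List.dropLast_concat
    rw [heq, piW, if_neg ha, if_pos hlast, hdrop]

/-! ### The two embeddings of permutations -/

/-- The permutation of `Fin (n+1)` fixing `0` and acting as `σ` via `Fin.succ`. -/
def iotaF {n : ℕ} (σ : Equiv.Perm (Fin n)) : Equiv.Perm (Fin (n + 1)) :=
  (finSuccEquiv n).trans ((σ.optionCongr).trans (finSuccEquiv n).symm)

/-- The permutation of `Fin (n+1)` sending `Fin.last n` to `0` and `castSucc i` to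
`(σ i).succ`. -/
def iotaL {n : ℕ} (σ : Equiv.Perm (Fin n)) : Equiv.Perm (Fin (n + 1)) :=
  finSuccEquivLast.trans ((σ.optionCongr).trans (finSuccEquiv n).symm)

@[simp] lemma iotaF_zero {n : ℕ} (σ : Equiv.Perm (Fin n)) : iotaF σ 0 = 0 := by
  simp [iotaF, Equiv.optionCongr]

@[simp] lemma iotaF_succ {n : ℕ} (σ : Equiv.Perm (Fin n)) (i : Fin n) :
    iotaF σ i.succ = (σ i).succ := by
  simp [iotaF, Equiv.optionCongr]

@[simp] lemma iotaL_castSucc {n : ℕ} (σ : Equiv.Perm (Fin n)) (i : Fin n) :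
    iotaL σ (Fin.castSucc i) = (σ i).succ := by
  simp [iotaL, Equiv.optionCongr]

@[simp] lemma iotaL_last {n : ℕ} (σ : Equiv.Perm (Fin n)) : iotaL σ (Fin.last n) = 0 := by
  simp [iotaL, Equiv.optionCongr]

/-- Inverse of `iotaL` on permutations killing the last element. -/
def iotaLInv {n : ℕ} (τ : Equiv.Perm (Fin (n + 1))) : Equiv.Perm (Fin n) :=
  Equiv.removeNone (finSuccEquivLast.symm.trans (τ.trans (finSuccEquiv n)))

lemma iotaLInv_iotaL {n : ℕ} (σ : Equiv.Perm (Fin n)) : iotaLInv (iotaL σ) = σ := by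
  apply Equiv.ext
  intro i
  have h : (finSuccEquivLast.symm.trans ((iotaL σ).trans (finSuccEquiv n))) (some i)
      = some (σ i) := by
    simp [Equiv.trans_apply, finSuccEquivLast_symm_some, finSuccEquiv_succ]
  have := Equiv.removeNone_some (finSuccEquivLast.symm.trans ((iotaL σ).trans (finSuccEquiv n)))
    ⟨σ i, h⟩
  rw [h] at this
  exact Option.some_injective _ this

lemma iotaL_iotaLInv {n : ℕ} (τ : Equiv.Perm (Fin (n + 1))) (hτ : τ (Fin.last n) = 0) :
    iotaL (iotaLInv τ) = τ := by
  apply Equiv.ext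
  intro i
  induction i using Fin.lastCases with
  | last => rw [iotaL_last, hτ]
  | cast j =>
    have hne : τ (Fin.castSucc j) ≠ 0 := by
      intro hc
      exact (Fin.castSucc_lt_last j).ne (τ.injective (hc.trans hτ.symm))
    obtain ⟨k, hk⟩ : ∃ k : Fin n, τ (Fin.castSucc j) = k.succ := by
      refine ⟨(τ (Fin.castSucc j)).pred hne, ?_⟩
      simp
    have h : (finSuccEquivLast.symm.trans (τ.trans (finSuccEquiv n))) (some j) = some k := by
      simp [Equiv.trans_apply, finSuccEquivLast_symm_some, hk, finSuccEquiv_succ]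
    have := Equiv.removeNone_some (finSuccEquivLast.symm.trans (τ.trans (finSuccEquiv n)))
      ⟨k, h⟩
    rw [h] at this
    have hji : iotaLInv τ j = k := Option.some_injective _ this
    rw [iotaL_castSucc, hji, ← hk]

/-- Inverse of `iotaF` on permutations fixing `0`. -/
def iotaFInv {n : ℕ} (τ : Equiv.Perm (Fin (n + 1))) : Equiv.Perm (Fin n) :=
  Equiv.removeNone ((finSuccEquiv n).symm.trans (τ.trans (finSuccEquiv n)))

lemma iotaFInv_iotaF {n : ℕ} (σ : Equiv.Perm (Fin n)) : iotaFInv (iotaF σ) = σ := by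
  apply Equiv.ext
  intro i
  have h : ((finSuccEquiv n).symm.trans ((iotaF σ).trans (finSuccEquiv n))) (some i)
      = some (σ i) := by
    simp [Equiv.trans_apply, finSuccEquiv_symm_some, finSuccEquiv_succ]
  have := Equiv.removeNone_some ((finSuccEquiv n).symm.trans ((iotaF σ).trans (finSuccEquiv n)))
    ⟨σ i, h⟩
  rw [h] at this
  exact Option.some_injective _ this

lemma iotaF_iotaFInv {n : ℕ} (τ : Equiv.Perm (Fin (n + 1))) (hτ : τ 0 = 0) :
    iotaF (iotaFInv τ) = τ := by
  apply Equiv.ext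
  intro i
  induction i using Fin.cases with
  | zero => rw [iotaF_zero, hτ]
  | succ j =>
    have hne : τ j.succ ≠ 0 := by
      intro hc
      exact (Fin.succ_ne_zero j) (τ.injective (hc.trans hτ.symm))
    obtain ⟨k, hk⟩ : ∃ k : Fin n, τ j.succ = k.succ := by
      refine ⟨(τ j.succ).pred hne, ?_⟩
      simp
    have h : ((finSuccEquiv n).symm.trans (τ.trans (finSuccEquiv n))) (some j) = some k := by
      simp [Equiv.trans_apply, finSuccEquiv_symm_some, hk, finSuccEquiv_succ]
    have := Equiv.removeNone_some ((finSuccEquiv n).symm.trans (τ.trans (finSuccEquiv n))) ⟨k, h⟩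
    rw [h] at this
    have hji : iotaFInv τ j = k := Option.some_injective _ this
    rw [iotaF_succ, hji, ← hk]

/-! ### `piPerm` computation lemmas -/

lemma word_f {α : Type*} {n : ℕ} (τ : Equiv.Perm (Fin (n + 2))) (f : Fin (n + 2) → α)
    (σ : Equiv.Perm (Fin (n + 1))) (hτ : τ = iotaF σ) :
    (List.finRange (n + 2)).map (fun j => f (τ j)) =
      f 0 :: (List.finRange (n + 1)).map (fun j => f (σ j).succ) := by
  subst hτ
  rw [List.finRange_succ, List.map_cons, List.map_map]
  simp [Function.comp]

lemma word_l {α : Type*} {n : ℕ} (τ : Equiv.Perm (Fin (n + 2))) (f : Fin (n + 2) → α)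
    (σ : Equiv.Perm (Fin (n + 1))) (hτ : τ = iotaL σ) :
    (List.finRange (n + 2)).map (fun j => f (τ j)) =
      ((List.finRange (n + 1)).map (fun j => f (σ j).succ)) ++ [f 0] := by
  subst hτ
  rw [← List.ofFn_eq_map, List.ofFn_succ']
  simp [List.concat_eq_append, ← List.ofFn_eq_map]

lemma piPerm_iotaF {n : ℕ} (σ : Equiv.Perm (Fin (n + 1))) :
    piPerm (iotaF σ) = piPerm σ := by
  unfold piPerm
  rw [word_f (iotaF σ) (fun j => (j : ℕ)) σ rfl]
  rcases hl : (List.finRange (n + 1)).map (fun j => ((σ j : ℕ) + 1)) with _ | ⟨b, l⟩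
  · simp [List.finRange_succ] at hl
  · have : (List.finRange (n + 1)).map (fun j => (((σ j).succ : Fin (n+2)) : ℕ)) = b :: l := by
      simpa [Fin.val_succ] using hl
    rw [show (Fin.val (0 : Fin (n+2))) = 0 from rfl, this, piW_zero_cons, ← this, List.map_map]
    congr 1

lemma piPerm_iotaL {n : ℕ} (σ : Equiv.Perm (Fin (n + 1))) :
    piPerm (iotaL σ) = - piPerm σ := by
  unfold piPerm
  rw [word_l (iotaL σ) (fun j => (j : ℕ)) σ rfl]
  rcases hl : (List.finRange (n + 1)).map (fun j => (((σ j).succ : Fin (n+2)) : ℕ)) with _ | ⟨a, l⟩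
  · simp [List.finRange_succ] at hl
  · have ha : a ≠ 0 := by
      have hmem : a ∈ (List.finRange (n + 1)).map
          (fun j => (((σ j).succ : Fin (n+2)) : ℕ)) := by
        rw [hl]; exact List.mem_cons_self
      obtain ⟨j, _, hj⟩ := List.mem_map.mp hmem
      simp [Fin.val_succ] at hj
      omega
    rw [show (Fin.val (0 : Fin (n+2))) = 0 from rfl, piW_concat_zero a l ha, ← hl,
      List.map_map]
    congr 1

lemma piPerm_eq_zero {n : ℕ} (τ : Equiv.Perm (Fin (n + 2)))
    (h0 : τ 0 ≠ 0) (hl : τ (Fin.last (n + 1)) ≠ 0) : piPerm τ = 0 := by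
  unfold piPerm
  have hhead : ((List.finRange (n + 2)).map fun j => (τ j : ℕ)).head? = some (τ 0 : ℕ) := by
    rw [← List.ofFn_eq_map, List.ofFn_succ]
    rfl
  have hlast : ((List.finRange (n + 2)).map fun j => (τ j : ℕ)).getLast?
      = some (τ (Fin.last (n + 1)) : ℕ) := by
    rw [← List.ofFn_eq_map, List.ofFn_succ', List.concat_eq_append]
    exact List.getLast?_concat
  have hlen : ((List.finRange (n + 2)).map fun j => (τ j : ℕ)).length = n + 2 := by simp
  rcases hL : (List.finRange (n + 2)).map (fun j => (τ j : ℕ)) with _ | ⟨a, _ | ⟨b, l⟩⟩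
  · rw [hL] at hlen; simp at hlen
  · rw [hL] at hlen; simp at hlen
  · rw [hL] at hhead hlast
    apply piW_of_ne
    · simp only [List.head?_cons, Option.some.injEq] at hhead
      intro hc
      apply h0
      have : (τ 0 : ℕ) = 0 := by omega
      exact Fin.ext this
    · rw [hlast]
      intro hc
      apply hl
      simp only [Option.some.injEq] at hc
      exact Fin.ext hc

lemma key_lemma {L : Type*} [LieRing L] :
    ∀ (n : ℕ) (f : Fin (n + 1) → L) (y : L),
      ⁅nestedBracket ((List.finRange (n + 1)).map f), y⁆ =
        ∑ σ : Equiv.Perm (Fin (n + 1)),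
          piPerm σ • foldBr ((List.finRange (n + 1)).map fun j => f (σ j)) y := by
  intro n
  induction n with
  | zero =>
    intro f y
    have hσ : ∀ σ : Equiv.Perm (Fin 1), σ = 1 := fun σ => Equiv.ext fun i =>
      Subsingleton.elim _ _
    rw [Finset.sum_eq_single_of_mem (1 : Equiv.Perm (Fin 1)) (Finset.mem_univ _)
      (fun σ _ hne => absurd (hσ σ) hne)]
    have h1 : List.finRange 1 = [(0 : Fin 1)] := by
      simp [List.finRange_succ]
    simp [h1, nestedBracket, piPerm, piW, foldBr]
  | succ n ih =>
    intro f y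
    have hne : (List.finRange (n + 1)).map (fun i => f i.succ) ≠ [] := by
      simp [List.finRange_eq_nil_iff]
    have hrange : (List.finRange (n + 2)).map f
        = f 0 :: (List.finRange (n + 1)).map (fun i => f i.succ) := by
      rw [List.finRange_succ, List.map_cons, List.map_map]
      rfl
    rw [hrange, nestedBracket_cons _ _ hne, lie_lie,
      ih (fun i => f i.succ) y, ih (fun i => f i.succ) ⁅f 0, y⁆, lie_finset_sum]
    have hT1 : ∀ σ : Equiv.Perm (Fin (n + 1)),
        ⁅f 0, piPerm σ • foldBr ((List.finRange (n + 1)).map fun j => f (σ j).succ) y⁆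
          = piPerm (iotaF σ) • foldBr ((List.finRange (n + 2)).map fun j => f (iotaF σ j)) y := by
      intro σ
      rw [lie_zsmul, piPerm_iotaF, word_f (iotaF σ) f σ rfl, ← foldBr_cons]
    have hT2 : ∀ σ : Equiv.Perm (Fin (n + 1)),
        piPerm σ • foldBr ((List.finRange (n + 1)).map fun j => f (σ j).succ) ⁅f 0, y⁆
          = - (piPerm (iotaL σ) • foldBr ((List.finRange (n + 2)).map fun j => f (iotaL σ j)) y) := by
      intro σ
      rw [piPerm_iotaL, word_l (iotaL σ) f σ rfl, foldBr_concat, neg_smul, neg_neg]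
    rw [Finset.sum_congr rfl (fun σ _ => hT1 σ), Finset.sum_congr rfl (fun σ _ => hT2 σ),
      Finset.sum_neg_distrib, sub_neg_eq_add]
    have hsplit :
        ∑ τ : Equiv.Perm (Fin (n + 2)),
            piPerm τ • foldBr ((List.finRange (n + 2)).map fun j => f (τ j)) y
          = (∑ τ ∈ Finset.univ.filter (fun τ : Equiv.Perm (Fin (n + 2)) => τ 0 = 0),
              piPerm τ • foldBr ((List.finRange (n + 2)).map fun j => f (τ j)) y)
            + ∑ τ ∈ Finset.univ.filter (fun τ : Equiv.Perm (Fin (n + 2)) => ¬ τ 0 = 0),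
                piPerm τ • foldBr ((List.finRange (n + 2)).map fun j => f (τ j)) y :=
      (Finset.sum_filter_add_sum_filter_not _ _ _).symm
    have hzero :
        ∑ τ ∈ Finset.univ.filter (fun τ : Equiv.Perm (Fin (n + 2)) => ¬ τ 0 = 0),
            piPerm τ • foldBr ((List.finRange (n + 2)).map fun j => f (τ j)) y
          = ∑ τ ∈ Finset.univ.filter
                (fun τ : Equiv.Perm (Fin (n + 2)) => ¬ τ 0 = 0 ∧ τ (Fin.last (n + 1)) = 0),
              piPerm τ • foldBr ((List.finRange (n + 2)).map fun j => f (τ j)) y := by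
      rw [← Finset.sum_filter_add_sum_filter_not
        (Finset.univ.filter (fun τ : Equiv.Perm (Fin (n + 2)) => ¬ τ 0 = 0))
        (fun τ => τ (Fin.last (n + 1)) = 0), Finset.filter_filter, Finset.filter_filter]
      have : ∑ τ ∈ Finset.univ.filter
          (fun τ : Equiv.Perm (Fin (n + 2)) => ¬ τ 0 = 0 ∧ ¬ τ (Fin.last (n + 1)) = 0),
            piPerm τ • foldBr ((List.finRange (n + 2)).map fun j => f (τ j)) y = 0 := by
        apply Finset.sum_eq_zero
        intro τ hτ
        rw [Finset.mem_filter] at hτ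
        rw [piPerm_eq_zero τ hτ.2.1 hτ.2.2, zero_smul]
      rw [this, add_zero]
    have hA : ∑ σ : Equiv.Perm (Fin (n + 1)),
          piPerm (iotaF σ) • foldBr ((List.finRange (n + 2)).map fun j => f (iotaF σ j)) y
        = ∑ τ ∈ Finset.univ.filter (fun τ : Equiv.Perm (Fin (n + 2)) => τ 0 = 0),
            piPerm τ • foldBr ((List.finRange (n + 2)).map fun j => f (τ j)) y := by
      refine Finset.sum_nbij' (fun σ => iotaF σ) (fun τ => iotaFInv τ) ?_ ?_ ?_ ?_ ?_
      · intro σ _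
        simp [Finset.mem_filter]
      · intro τ _
        exact Finset.mem_univ _
      · intro σ _
        exact iotaFInv_iotaF σ
      · intro τ hτ
        exact iotaF_iotaFInv τ (Finset.mem_filter.mp hτ).2
      · intro σ _
        rfl
    have hB : ∑ σ : Equiv.Perm (Fin (n + 1)),
          piPerm (iotaL σ) • foldBr ((List.finRange (n + 2)).map fun j => f (iotaL σ j)) y
        = ∑ τ ∈ Finset.univ.filter
              (fun τ : Equiv.Perm (Fin (n + 2)) => ¬ τ 0 = 0 ∧ τ (Fin.last (n + 1)) = 0),
            piPerm τ • foldBr ((List.finRange (n + 2)).map fun j => f (τ j)) y := by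
      refine Finset.sum_nbij' (fun σ => iotaL σ) (fun τ => iotaLInv τ) ?_ ?_ ?_ ?_ ?_
      · intro σ _
        refine Finset.mem_filter.mpr ⟨Finset.mem_univ _, ?_, iotaL_last σ⟩
        have : iotaL σ (Fin.castSucc 0) = (σ 0).succ := iotaL_castSucc σ 0
        rw [Fin.castSucc_zero] at this
        rw [this]
        exact Fin.succ_ne_zero _
      · intro τ _
        exact Finset.mem_univ _
      · intro σ _
        exact iotaLInv_iotaL σ
      · intro τ hτ
        exact iotaL_iotaLInv τ (Finset.mem_filter.mp hτ).2.2
      · intro σ _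
        rfl
    rw [hsplit, hzero, hA, hB]

/-- generalized Jacobi identity, first form:
`X_{[v]w} = Σ_{σ ∈ S_p} π_p(σ) X_{σ(v)w}`. -/
theorem generalized_jacobi_first {L : Type*} [LieRing L] [LieAlgebra ℝ L]
    {m p q : ℕ} (hp : 1 ≤ p) (hq : 1 ≤ q)
    (X : Fin m → L) (v : Fin p → Fin m) (w : Fin q → Fin m) :
    ⁅nestedBracket ((List.finRange p).map fun j => X (v j)),
      nestedBracket ((List.finRange q).map fun j => X (w j))⁆ =
      ∑ σ : Equiv.Perm (Fin p),
        piPerm σ • nestedBracket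
          (((List.finRange p).map fun j => X (v (σ j))) ++
            (List.finRange q).map fun j => X (w j)) := by
  obtain ⟨n, rfl⟩ : ∃ n, p = n + 1 := ⟨p - 1, by omega⟩
  have hwne : (List.finRange q).map (fun j => X (w j)) ≠ [] := by
    simp only [ne_eq, List.map_eq_nil_iff, List.finRange_eq_nil_iff]
    omega
  rw [key_lemma n (fun j => X (v j)) (nestedBracket ((List.finRange q).map fun j => X (w j)))]
  apply Finset.sum_congr rfl
  intro σ _
  rw [nestedBracket_append _ _ hwne]
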